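/- For real γ and Y > 2, S(Y,1,γ) = -∑_{1 ≤ n ≤ Y/2} e(2γn) - e(γ) S(Y/2, 1, 2γ) + O(1), where S(Y,h,γ) = ∑_{1 ≤ n ≤ Y} ε(n) ε(n+h) e(γn) and the implied constant is absolute. -/

import Mathlib

open Complex Finset

/-- `e(x) = exp(2πix)`. -/
noncomputable def e (x : ℝ) : ℂ := Complex.exp (2 * Real.pi * Complex.I * x)

/-- `ε(n) = (-1)^(s₂ n)` where `s₂` is the binary digit sum. -/
def eps (n : ℕ) : ℤ := (-1) ^ ((Nat.digits 2 n).sum)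

/-- `S(Y,h,β) = ∑_{1 ≤ n ≤ Y} ε(n) ε(n+h) e(βn)`. -/
noncomputable def S (Y : ℝ) (h : ℕ) (β : ℝ) : ℂ :=
  ∑ n ∈ Finset.Icc 1 ⌊Y⌋₊, (eps n : ℂ) * (eps (n + h) : ℂ) * e (β * n)

lemma e_add (x y : ℝ) : e (x + y) = e x * e y := by
  simp only [e, ← Complex.exp_add]
  push_cast
  ring_nf

lemma e_zero : e 0 = 1 := by simp [e]

lemma abs_e (x : ℝ) : ‖e x‖ = 1 := by
  have h : e x = Complex.exp ((2 * Real.pi * x : ℝ) * Complex.I) := by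
    unfold e; push_cast; ring_nf
  rw [h, Complex.norm_exp_ofReal_mul_I]

lemma eps_two_mul (m : ℕ) : eps (2 * m) = eps m := by
  rcases Nat.eq_zero_or_pos m with h | h
  · simp [h]
  · unfold eps
    rw [Nat.digits_def' (by norm_num : 1 < 2) (by omega)]
    have h1 : 2 * m % 2 = 0 := by omega
    have h2 : 2 * m / 2 = m := by omega
    rw [h1, h2, List.sum_cons, zero_add]

lemma eps_two_mul_add_one (m : ℕ) : eps (2 * m + 1) = -eps m := by
  unfold eps
  rw [Nat.digits_def' (by norm_num : 1 < 2) (by omega)]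
  have h1 : (2 * m + 1) % 2 = 1 := by omega
  have h2 : (2 * m + 1) / 2 = m := by omega
  rw [h1, h2, List.sum_cons, pow_add, pow_one]
  ring

lemma eps_mul_self (m : ℕ) : (eps m : ℂ) * (eps m : ℂ) = 1 := by
  have h : eps m * eps m = 1 := by
    unfold eps
    rw [← pow_add]
    exact Even.neg_one_pow ⟨_, rfl⟩
  calc (eps m : ℂ) * (eps m : ℂ) = ((eps m * eps m : ℤ) : ℂ) := by push_cast; ring
    _ = 1 := by rw [h]; norm_num

lemma abs_eps (m : ℕ) : ‖((eps m : ℤ) : ℂ)‖ = 1 := by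
  rcases neg_one_pow_eq_or ℤ ((Nat.digits 2 m).sum) with h | h <;>
    simp [eps, h]

lemma sum_split (f : ℕ → ℂ) (N : ℕ) :
    ∑ n ∈ Icc 1 N, f n =
      ∑ m ∈ Icc 1 (N / 2), f (2 * m) + ∑ m ∈ range ((N + 1) / 2), f (2 * m + 1) := by
  induction N with
  | zero => simp
  | succ n ih =>
    rw [Finset.sum_Icc_succ_top (by omega : 1 ≤ n + 1)]
    rcases Nat.even_or_odd (n + 1) with ⟨k, hk⟩ | ⟨k, hk⟩
    · have h1 : (n + 1) / 2 = n / 2 + 1 := by omega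
      have h2 : (n + 2) / 2 = (n + 1) / 2 := by omega
      have h3 : 2 * (n / 2 + 1) = n + 1 := by omega
      rw [ih, h2, h1, Finset.sum_Icc_succ_top (by omega : 1 ≤ n / 2 + 1), h3]
      ring
    · have h1 : (n + 1) / 2 = n / 2 := by omega
      have h2 : (n + 2) / 2 = (n + 1) / 2 + 1 := by omega
      have h3 : 2 * ((n + 1) / 2) + 1 = n + 1 := by omega
      rw [ih, h2, Finset.sum_range_succ, h3, h1]
      ring

theorem S_one_recurrence : ∃ C : ℝ, ∀ (γ Y : ℝ), 2 < Y →
    ‖S Y 1 γ -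
      (-(∑ n ∈ Finset.Icc 1 ⌊Y / 2⌋₊, e (2 * γ * n)) - e γ * S (Y / 2) 1 (2 * γ))‖ ≤ C := by
  refine ⟨2, fun γ Y hY => ?_⟩
  have hN2 : 2 ≤ ⌊Y⌋₊ := Nat.le_floor (by exact_mod_cast hY.le)
  set N := ⌊Y⌋₊ with hNdef
  have hK : ⌊Y / 2⌋₊ = N / 2 := by
    rw [show (2 : ℝ) = ((2 : ℕ) : ℝ) by norm_num, Nat.floor_div_natCast]
  set T : ℕ → ℂ := fun m => (eps m : ℂ) * (eps (m + 1) : ℂ) * e (2 * γ * m) with hT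
  -- rewrite S (Y/2) 1 (2γ)
  have hS2 : S (Y / 2) 1 (2 * γ) = ∑ m ∈ Icc 1 (N / 2), T m := by
    unfold S
    rw [hK]
  -- split S Y 1 γ
  have hsplit := sum_split (fun n => (eps n : ℂ) * (eps (n + 1) : ℂ) * e (γ * n)) N
  have hA : (∑ m ∈ Icc 1 (N / 2),
      ((eps (2 * m) : ℂ) * (eps (2 * m + 1) : ℂ) * e (γ * (2 * m : ℕ)))) =
      -∑ n ∈ Icc 1 (N / 2), e (2 * γ * n) := by
    rw [← Finset.sum_neg_distrib]
    refine Finset.sum_congr rfl fun m _ => ?_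
    have harg : γ * ((2 * m : ℕ) : ℝ) = 2 * γ * m := by push_cast; ring
    rw [eps_two_mul, eps_two_mul_add_one, harg]
    push_cast
    calc ((eps m : ℂ)) * (-(eps m : ℂ)) * e (2 * γ * m)
        = -(((eps m : ℂ)) * (eps m : ℂ) * e (2 * γ * m)) := by ring
      _ = -e (2 * γ * m) := by rw [eps_mul_self, one_mul]
  have hB : (∑ m ∈ range ((N + 1) / 2),
      ((eps (2 * m + 1) : ℂ) * (eps (2 * m + 1 + 1) : ℂ) * e (γ * (2 * m + 1 : ℕ)))) =
      e γ - e γ * ∑ m ∈ Icc 1 ((N + 1) / 2 - 1), T m := by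
    have hterm : ∀ m : ℕ, ((eps (2 * m + 1) : ℂ) * (eps (2 * m + 1 + 1) : ℂ) *
        e (γ * (2 * m + 1 : ℕ))) = -(e γ) * T m := by
      intro m
      have h1 : 2 * m + 1 + 1 = 2 * (m + 1) := by ring
      have harg : γ * ((2 * m + 1 : ℕ) : ℝ) = γ + 2 * γ * m := by push_cast; ring
      rw [h1, eps_two_mul, eps_two_mul_add_one, harg, e_add, hT]
      push_cast
      ring
    have hrange : range ((N + 1) / 2) = insert 0 (Icc 1 ((N + 1) / 2 - 1)) := by
      ext x
      simp only [Finset.mem_range, Finset.mem_insert, Finset.mem_Icc]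
      omega
    have heps0 : eps 0 = 1 := by simp [eps]
    have heps1 : eps 1 = -1 := by
      have hd : Nat.digits 2 1 = [1] := by
        rw [Nat.digits_def' (by norm_num : 1 < 2) (by norm_num)]
        norm_num
      simp [eps, hd]
    have hT0 : T 0 = -1 := by
      simp [hT, e_zero, heps0, heps1]
    rw [Finset.sum_congr rfl fun m _ => hterm m, ← Finset.mul_sum, hrange,
      Finset.sum_insert (by simp), hT0]
    ring
  have hSY : S Y 1 γ = ∑ n ∈ Icc 1 N, (eps n : ℂ) * (eps (n + 1) : ℂ) * e (γ * n) := rfl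
  rw [hSY, hsplit, hA, hB, hK, hS2]
  rcases Nat.even_or_odd N with ⟨k, hk⟩ | ⟨k, hk⟩
  · -- N even, N = k + k with k ≥ 1
    have hk1 : 1 ≤ k := by omega
    have h1 : N / 2 = k := by omega
    have h2 : (N + 1) / 2 - 1 = k - 1 := by omega
    have h3 : k = (k - 1) + 1 := by omega
    have hsum : ∑ m ∈ Icc 1 k, T m = ∑ m ∈ Icc 1 (k - 1), T m + T k := by
      conv_lhs => rw [h3]
      rw [Finset.sum_Icc_succ_top (by omega : 1 ≤ k - 1 + 1), ← h3]
    rw [h1, h2, hsum]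
    have heq : (-∑ n ∈ Icc 1 k, e (2 * γ * ↑n) + (e γ - e γ * ∑ m ∈ Icc 1 (k - 1), T m) -
        (-∑ n ∈ Icc 1 k, e (2 * γ * ↑n) -
          e γ * ((∑ m ∈ Icc 1 (k - 1), T m) + T k))) = e γ + e γ * T k := by ring
    rw [heq]
    calc ‖e γ + e γ * T k‖
        ≤ ‖e γ‖ + ‖e γ * T k‖ := norm_add_le _ _
      _ ≤ 2 := by
          rw [norm_mul, abs_e, hT]
          simp only []
          rw [norm_mul, norm_mul, abs_eps, abs_eps, abs_e]
          norm_num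
  · -- N odd
    have h1 : N / 2 = k := by omega
    have h2 : (N + 1) / 2 - 1 = k := by omega
    rw [h1, h2]
    have heq : (-∑ n ∈ Icc 1 k, e (2 * γ * ↑n) + (e γ - e γ * ∑ m ∈ Icc 1 k, T m) -
        (-∑ n ∈ Icc 1 k, e (2 * γ * ↑n) - e γ * ∑ m ∈ Icc 1 k, T m)) = e γ := by ring
    rw [heq, abs_e]
    norm_num
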